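/- Let n be a positive integer, let A ⊆ [n] with a := |A|, let C := [n] \ A, let L be a positive integer, let T_1,…,T_L be subsets of C, and let b ∈ {0,1}^L. For x ∈ {0,1}^n write x_A and x_C for the restrictions of x to A and C, write x̄ for the bitwise complement of x, and let S_T(z) := {ℓ ∈ [L] : z_i = 1 for all i ∈ T_ℓ} for z ∈ {0,1}^C. Define g⁰ : {0,1}^A → {0,1} to be identically 0, and g¹ : {0,1}^A → {0,1} by g¹(z) = 1 if |z| > a/2 + √a or |z| < a/2 − √a, and g¹(z) = 0 if a/2 − √a ≤ |z| ≤ a/2 + √a. Define f : {0,1}^n × {0,1} × {0,1} → {0,1} by: f(x,0,0) = f(x,1,1) = 0 for all x; f(x,0,1) = 0 if |S_T(x_C)| ≠ 1, and f(x,0,1) = g^{b_ℓ}(x_A) if S_T(x_C) = {ℓ}; f(x,1,0) = 0 if |S_T(x̄_C)| ≠ 1, and f(x,1,0) = g^{1−b_ℓ}(x_A) if S_T(x̄_C) = {ℓ}. Then f, viewed as a function on {0,1}^{n+2}, is intersecting: for any u, v ∈ {0,1}^{n+2} with f(u) = f(v) = 1 there exists a coordinate i with u_i = v_i = 1. -/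
import Mathlib


/-- The yes-functions in the intersectingness lower bound construction are
intersecting.  Here `[n]` is `Fin n`, `A ⊆ [n]` with `a = |A|`, `C = [n] \ A`, the terms
`T_ℓ ⊆ C`, `b ∈ {0,1}^L`, and a point of `{0,1}^{n+2}` is encoded as a triple
`(x, y₁, y₂) ∈ {0,1}^n × {0,1} × {0,1}`.  `g¹` is the indicator that the weight of
`x_A` is `> a/2 + √a` or `< a/2 − √a` (and `g⁰ ≡ 0`); the function `f` is specified
via hypotheses exactly as in the construction.  Conclusion: `f` is intersecting, i.e.
any two `1`-inputs share a coordinate where both are `1` (the shared coordinate may be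
among the first `n` coordinates or one of the two extra coordinates). -/
theorem yes_function_is_intersecting (n : ℕ) (A : Finset (Fin n)) (L : ℕ) (hL : 0 < L)
    (T : Fin L → Finset (Fin n)) (hT : ∀ ℓ, T ℓ ⊆ Aᶜ)
    (b : Fin L → Bool)
    (g1 : (Fin n → Bool) → Bool)
    (hg1 : ∀ x : Fin n → Bool, g1 x = true ↔
      ((A.card : ℝ) / 2 + Real.sqrt A.card < ((A.filter (fun i => x i = true)).card : ℝ) ∨
        ((A.filter (fun i => x i = true)).card : ℝ) < (A.card : ℝ) / 2 - Real.sqrt A.card))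
    (f : (Fin n → Bool) → Bool → Bool → Bool)
    (hf00 : ∀ x, f x false false = false)
    (hf11 : ∀ x, f x true true = false)
    (hf01zero : ∀ x,
      (Finset.univ.filter (fun ℓ : Fin L => ∀ i ∈ T ℓ, x i = true)).card ≠ 1 →
      f x false true = false)
    (hf01one : ∀ (x : Fin n → Bool) (ℓ : Fin L),
      Finset.univ.filter (fun ℓ' : Fin L => ∀ i ∈ T ℓ', x i = true) = {ℓ} →
      f x false true = (if b ℓ = true then g1 x else false))
    (hf10zero : ∀ x,
      (Finset.univ.filter (fun ℓ : Fin L => ∀ i ∈ T ℓ, x i = false)).card ≠ 1 →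
      f x true false = false)
    (hf10one : ∀ (x : Fin n → Bool) (ℓ : Fin L),
      Finset.univ.filter (fun ℓ' : Fin L => ∀ i ∈ T ℓ', x i = false) = {ℓ} →
      f x true false = (if b ℓ = true then false else g1 x)) :
    ∀ (u v : Fin n → Bool) (u1 u2 v1 v2 : Bool),
      f u u1 u2 = true → f v v1 v2 = true →
      (∃ i, u i = true ∧ v i = true) ∨ (u1 = true ∧ v1 = true) ∨ (u2 = true ∧ v2 = true) := by

  intro u v u1 u2 v1 v2 hu hv
  have extract01 : ∀ x : Fin n → Bool, f x false true = true →
      ∃ ℓ, Finset.univ.filter (fun ℓ' : Fin L => ∀ i ∈ T ℓ', x i = true) = {ℓ} ∧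
        (∀ i ∈ T ℓ, x i = true) ∧ b ℓ = true := by
    intro x hx
    by_cases h : (Finset.univ.filter (fun ℓ : Fin L => ∀ i ∈ T ℓ, x i = true)).card = 1
    · obtain ⟨ℓ, hℓ⟩ := Finset.card_eq_one.mp h
      have hmem : ℓ ∈ Finset.univ.filter (fun ℓ' : Fin L => ∀ i ∈ T ℓ', x i = true) := by
        rw [hℓ]; exact Finset.mem_singleton_self ℓ
      have hcond := (Finset.mem_filter.mp hmem).2
      have heq := hf01one x ℓ hℓ
      rw [hx] at heq
      by_cases hb : b ℓ = true
      · exact ⟨ℓ, hℓ, hcond, hb⟩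
      · simp [hb] at heq
    · rw [hf01zero x h] at hx; exact absurd hx (by simp)
  have extract10 : ∀ x : Fin n → Bool, f x true false = true →
      ∃ ℓ, Finset.univ.filter (fun ℓ' : Fin L => ∀ i ∈ T ℓ', x i = false) = {ℓ} ∧
        (∀ i ∈ T ℓ, x i = false) ∧ b ℓ = false := by
    intro x hx
    by_cases h : (Finset.univ.filter (fun ℓ : Fin L => ∀ i ∈ T ℓ, x i = false)).card = 1
    · obtain ⟨ℓ, hℓ⟩ := Finset.card_eq_one.mp h
      have hmem : ℓ ∈ Finset.univ.filter (fun ℓ' : Fin L => ∀ i ∈ T ℓ', x i = false) := by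
        rw [hℓ]; exact Finset.mem_singleton_self ℓ
      have hcond := (Finset.mem_filter.mp hmem).2
      have heq := hf10one x ℓ hℓ
      rw [hx] at heq
      by_cases hb : b ℓ = true
      · simp [hb] at heq
      · exact ⟨ℓ, hℓ, hcond, Bool.not_eq_true _ ▸ hb⟩
    · rw [hf10zero x h] at hx; exact absurd hx (by simp)
  match u1, u2, v1, v2 with
  | false, false, _, _ => rw [hf00] at hu; exact absurd hu (by simp)
  | true, true, _, _ => rw [hf11] at hu; exact absurd hu (by simp)
  | _, _, false, false => rw [hf00] at hv; exact absurd hv (by simp)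
  | _, _, true, true => rw [hf11] at hv; exact absurd hv (by simp)
  | false, true, false, true => exact Or.inr (Or.inr ⟨rfl, rfl⟩)
  | true, false, true, false => exact Or.inr (Or.inl ⟨rfl, rfl⟩)
  | false, true, true, false =>
      left
      obtain ⟨ℓ, hℓeq, hc, hb⟩ := extract01 u hu
      obtain ⟨ℓ', hℓ'eq, hc', hb'⟩ := extract10 v hv
      by_contra h
      push_neg at h
      have hmem : ℓ ∈ Finset.univ.filter (fun ℓ'' : Fin L => ∀ i ∈ T ℓ'', v i = false) := by
        refine Finset.mem_filter.mpr ⟨Finset.mem_univ _, fun i hi => ?_⟩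
        have := h i (hc i hi)
        simpa using this
      rw [hℓ'eq, Finset.mem_singleton] at hmem
      rw [hmem, hb'] at hb
      exact absurd hb (by simp)
  | true, false, false, true =>
      left
      obtain ⟨ℓ, hℓeq, hc, hb⟩ := extract10 u hu
      obtain ⟨ℓ', hℓ'eq, hc', hb'⟩ := extract01 v hv
      by_contra h
      push_neg at h
      have hmem : ℓ' ∈ Finset.univ.filter (fun ℓ'' : Fin L => ∀ i ∈ T ℓ'', u i = false) := by
        refine Finset.mem_filter.mpr ⟨Finset.mem_univ _, fun i hi => ?_⟩
        have hvi := hc' i hi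
        by_contra hui
        exact absurd hvi (by simpa [Bool.not_eq_false] using (h i (by simpa using hui)))
      rw [hℓeq, Finset.mem_singleton] at hmem
      rw [hmem, hb] at hb'
      exact absurd hb' (by simp)
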